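/- Let a ≥ b > 0 and set k = a/√(a² + b²). Then ∫₀^{ab/√(a²+b²)} (a² + b²)² x² / √((a² + b²)² x⁴ − 2a²b²(a² − b²) x² + a⁴b⁴) dx = (ab√(a² + b²)/2)·( K(k) − 2E(k) + 2b/√(a² + b²) ), where K(k) = ∫₀^{π/2} dθ/√(1 − k² sin²θ) and E(k) = ∫₀^{π/2} √(1 − k² sin²θ) dθ. -/

import Mathlib

open Real

/-- Complete elliptic integral of the first kind. -/
noncomputable def ellipticK (k : ℝ) : ℝ :=
  ∫ θ in (0:ℝ)..(π / 2), 1 / Real.sqrt (1 - k ^ 2 * Real.sin θ ^ 2)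

/-- Complete elliptic integral of the second kind. -/
noncomputable def ellipticE (k : ℝ) : ℝ :=
  ∫ θ in (0:ℝ)..(π / 2), Real.sqrt (1 - k ^ 2 * Real.sin θ ^ 2)

set_option maxHeartbeats 4000000 in
/-- Evaluation of the elliptic integral `𝓔₁` arising in the computation of the
limit hyperbolic excess. -/
theorem excess_integral_E1 (a b : ℝ) (hb : 0 < b) (hab : b ≤ a)
    (k : ℝ) (hk : k = a / Real.sqrt (a ^ 2 + b ^ 2)) :
    ∫ x in (0:ℝ)..(a * b / Real.sqrt (a ^ 2 + b ^ 2)),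
        (a ^ 2 + b ^ 2) ^ 2 * x ^ 2 /
          Real.sqrt ((a ^ 2 + b ^ 2) ^ 2 * x ^ 4
            - 2 * a ^ 2 * b ^ 2 * (a ^ 2 - b ^ 2) * x ^ 2 + a ^ 4 * b ^ 4)
      = a * b * Real.sqrt (a ^ 2 + b ^ 2) / 2 *
          (ellipticK k - 2 * ellipticE k + 2 * b / Real.sqrt (a ^ 2 + b ^ 2)) := by
  have ha : 0 < a := lt_of_lt_of_le hb hab
  have habsq : (0:ℝ) < a ^ 2 + b ^ 2 := by positivity
  set c : ℝ := Real.sqrt (a ^ 2 + b ^ 2) with hcdef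
  have hc : 0 < c := Real.sqrt_pos.2 habsq
  have hc2 : c ^ 2 = a ^ 2 + b ^ 2 := Real.sq_sqrt habsq.le
  subst hk
  -- basic positivity of the quartic
  have hQpos : ∀ x : ℝ, 0 < (a ^ 2 + b ^ 2) ^ 2 * x ^ 4
      - 2 * a ^ 2 * b ^ 2 * (a ^ 2 - b ^ 2) * x ^ 2 + a ^ 4 * b ^ 4 := by
    intro x
    nlinarith [sq_nonneg ((a^2+b^2)^2*x^2 - a^2*b^2*(a^2-b^2)), pow_pos ha 6, pow_pos hb 6,
      mul_pos (pow_pos ha 6) (pow_pos hb 6), sq_nonneg (a^2+b^2), sq_nonneg x]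
  -- the integrand
  set F : ℝ → ℝ := fun x => (a ^ 2 + b ^ 2) ^ 2 * x ^ 2 /
      Real.sqrt ((a ^ 2 + b ^ 2) ^ 2 * x ^ 4
        - 2 * a ^ 2 * b ^ 2 * (a ^ 2 - b ^ 2) * x ^ 2 + a ^ 4 * b ^ 4) with hFdef
  have hFcont : Continuous F := by
    apply Continuous.div (by fun_prop) (by fun_prop)
    intro x
    exact ne_of_gt (Real.sqrt_pos.2 (hQpos x))
  -- Δ, P, g, W and their derivatives
  set Δ : ℝ → ℝ := fun φ => Real.sqrt (1 - (a / c) ^ 2 * Real.sin φ ^ 2) with hΔdef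
  have hipos : ∀ φ : ℝ, 0 < 1 - (a / c) ^ 2 * Real.sin φ ^ 2 := by
    intro φ
    have h1 : (a / c) ^ 2 = a ^ 2 / (a ^ 2 + b ^ 2) := by rw [div_pow, hc2]
    have h2 : Real.sin φ ^ 2 ≤ 1 := Real.sin_sq_le_one φ
    have h3 : a ^ 2 / (a ^ 2 + b ^ 2) < 1 := by
      rw [div_lt_one habsq]; nlinarith
    nlinarith [sq_nonneg (Real.sin φ), div_nonneg (sq_nonneg a) habsq.le]
  have hΔpos : ∀ φ, 0 < Δ φ := fun φ => Real.sqrt_pos.2 (hipos φ)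
  have hΔsq : ∀ φ, Δ φ ^ 2 = 1 - (a / c) ^ 2 * Real.sin φ ^ 2 :=
    fun φ => Real.sq_sqrt (hipos φ).le
  set P : ℝ → ℝ := fun φ => c * Δ φ + b * Real.sin φ with hPdef
  set g : ℝ → ℝ := fun φ => a * b * Real.cos φ / P φ with hgdef
  set Pd : ℝ → ℝ := fun φ =>
      c * (1 / (2 * Δ φ) * (-((a / c) ^ 2 * (2 * Real.sin φ * Real.cos φ)))) + b * Real.cos φ
    with hPddef
  set gd : ℝ → ℝ := fun φ =>
      (a * b * -Real.sin φ * P φ - a * b * Real.cos φ * Pd φ) / P φ ^ 2 with hgddef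
  set W : ℝ → ℝ := fun φ => a * b * c ^ 2 * (Real.sin φ * Real.cos φ) / P φ with hWdef
  set Wd : ℝ → ℝ := fun φ =>
      (a * b * c ^ 2 * (Real.cos φ * Real.cos φ + Real.sin φ * -Real.sin φ) * P φ
        - a * b * c ^ 2 * (Real.sin φ * Real.cos φ) * Pd φ) / P φ ^ 2 with hWddef
  -- positivity of P on the interval
  have hPpos : ∀ φ ∈ Set.uIcc (0:ℝ) (π / 2), 0 < P φ := by
    intro φ hφ
    rw [Set.uIcc_of_le (by positivity : (0:ℝ) ≤ π / 2)] at hφ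
    have hs : 0 ≤ Real.sin φ := Real.sin_nonneg_of_nonneg_of_le_pi hφ.1
      (le_trans hφ.2 (by linarith [Real.pi_pos]))
    have := hΔpos φ
    have : 0 < c * Δ φ := by positivity
    simp only [hPdef]
    nlinarith
  -- derivative facts
  have hΔderiv : ∀ φ, HasDerivAt Δ
      (1 / (2 * Δ φ) * (-((a / c) ^ 2 * (2 * Real.sin φ * Real.cos φ)))) φ := by
    intro φ
    have hi : HasDerivAt (fun φ => 1 - (a / c) ^ 2 * Real.sin φ ^ 2)
        (-((a / c) ^ 2 * (2 * Real.sin φ * Real.cos φ))) φ := by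
      have h1 : HasDerivAt (fun φ => Real.sin φ ^ 2) (2 * Real.sin φ ^ (2-1) * Real.cos φ) φ :=
        (Real.hasDerivAt_sin φ).pow 2
      have h2 := (h1.const_mul ((a / c) ^ 2)).const_sub 1
      refine h2.congr_deriv ?_
      ring
    have h3 := (Real.hasDerivAt_sqrt (ne_of_gt (hipos φ))).comp φ hi
    exact h3
  have hPderiv : ∀ φ, HasDerivAt P (Pd φ) φ := by
    intro φ
    exact ((hΔderiv φ).const_mul c).add ((Real.hasDerivAt_sin φ).const_mul b)
  have hgderiv : ∀ φ ∈ Set.uIcc (0:ℝ) (π / 2), HasDerivAt g (gd φ) φ := by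
    intro φ hφ
    have hnum : HasDerivAt (fun φ => a * b * Real.cos φ) (a * b * -Real.sin φ) φ :=
      (Real.hasDerivAt_cos φ).const_mul (a * b)
    exact hnum.div (hPderiv φ) (ne_of_gt (hPpos φ hφ))
  have hWderiv : ∀ φ ∈ Set.uIcc (0:ℝ) (π / 2), HasDerivAt W (Wd φ) φ := by
    intro φ hφ
    have hnum : HasDerivAt (fun φ => a * b * c ^ 2 * (Real.sin φ * Real.cos φ))
        (a * b * c ^ 2 * (Real.cos φ * Real.cos φ + Real.sin φ * -Real.sin φ)) φ :=
      ((Real.hasDerivAt_sin φ).mul (Real.hasDerivAt_cos φ)).const_mul (a * b * c ^ 2)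
    exact hnum.div (hPderiv φ) (ne_of_gt (hPpos φ hφ))
  -- continuity of various functions on the interval
  have hΔcont : Continuous Δ := by
    apply Real.continuous_sqrt.comp; fun_prop
  have hΔne : ∀ φ, Δ φ ≠ 0 := fun φ => ne_of_gt (hΔpos φ)
  have hPcont : Continuous P := by fun_prop
  have hPdcont : ContinuousOn Pd (Set.uIcc (0:ℝ) (π / 2)) := by
    apply ContinuousOn.add _ (by fun_prop)
    apply ContinuousOn.mul continuousOn_const
    apply ContinuousOn.mul
    · apply ContinuousOn.div continuousOn_const (by fun_prop)
      intro φ _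
      have := hΔpos φ
      positivity
    · fun_prop
  have hgdcont : ContinuousOn gd (Set.uIcc (0:ℝ) (π / 2)) := by
    apply ContinuousOn.div
    · exact ContinuousOn.sub (by fun_prop)
        ((continuousOn_const.mul Real.continuous_cos.continuousOn).mul hPdcont)
    · fun_prop
    · intro φ hφ; exact pow_ne_zero 2 (hPpos φ hφ).ne'
  have hWdcont : ContinuousOn Wd (Set.uIcc (0:ℝ) (π / 2)) := by
    apply ContinuousOn.div
    · exact ContinuousOn.sub (by fun_prop) ((continuousOn_const.mul (by fun_prop)).mul hPdcont)
    · fun_prop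
    · intro φ hφ; exact pow_ne_zero 2 (hPpos φ hφ).ne'
  -- endpoint values
  have hΔ0 : Δ 0 = 1 := by simp [hΔdef]
  have hg0 : g 0 = a * b / c := by
    simp [hgdef, hPdef, hΔ0]
  have hgh : g (π / 2) = 0 := by
    simp [hgdef]
  have hW0 : W 0 = 0 := by simp [hWdef]
  have hWh : W (π / 2) = 0 := by simp [hWdef]
  -- the sqrt of the quartic along g
  have hsqrtQ : ∀ φ ∈ Set.uIcc (0:ℝ) (π / 2),
      Real.sqrt ((a ^ 2 + b ^ 2) ^ 2 * (g φ) ^ 4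
        - 2 * a ^ 2 * b ^ 2 * (a ^ 2 - b ^ 2) * (g φ) ^ 2 + a ^ 4 * b ^ 4)
        = 2 * a ^ 2 * b ^ 3 / P φ := by
    intro φ hφ
    have hP := hPpos φ hφ
    have hQ : (a ^ 2 + b ^ 2) ^ 2 * (g φ) ^ 4
        - 2 * a ^ 2 * b ^ 2 * (a ^ 2 - b ^ 2) * (g φ) ^ 2 + a ^ 4 * b ^ 4
        = (2 * a ^ 2 * b ^ 3 / P φ) ^ 2 := by
      have hd2 : c ^ 2 * Δ φ ^ 2 = c ^ 2 - a ^ 2 * Real.sin φ ^ 2 := by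
        rw [hΔsq φ]; field_simp
      have hsc : Real.sin φ ^ 2 + Real.cos φ ^ 2 = 1 := Real.sin_sq_add_cos_sq φ
      have hPne : c * Δ φ + b * Real.sin φ ≠ 0 := by
        have h := hPpos φ hφ; simp only [hPdef] at h; exact h.ne'
      simp only [hgdef, hPdef]
      field_simp
      linear_combination ((1*(Δ φ)^4*c^2) + (-2*(Δ φ)^2*(Real.cos φ)^2*a^2) + (2*(Δ φ)^2*(Real.cos φ)^2*b^2) + (-1*(Δ φ)^2*(Real.sin φ)^2*a^2) + (2*(Δ φ)^2*(Real.sin φ)^2*b^2) + (2*(Δ φ)^2*a^2) + (-2*(Δ φ)^2*b^2) + (4*(Δ φ)*c*(Real.sin φ)*b) + (1*(Real.sin φ)^2*a^2) + (4*(Real.sin φ)^2*b^2) + (-1*a^2) + (-1*b^2)) * hc2 + ((-2*(Δ φ)^2*a^4) + (2*(Δ φ)^2*b^4) + (-4*(Δ φ)*c*(Real.sin φ)*a^2*b) + (4*(Δ φ)*c*(Real.sin φ)*b^3) + (1*(Real.cos φ)^2*a^4) + (2*(Real.cos φ)^2*a^2*b^2) + (1*(Real.cos φ)^2*b^4) +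 (-1*(Real.sin φ)^2*a^4) + (-4*(Real.sin φ)^2*a^2*b^2) + (1*(Real.sin φ)^2*b^4) + (1*a^4) + (2*a^2*b^2) + (1*b^4)) * hsc + ((1*(Δ φ)^2*a^2) + (1*(Δ φ)^2*b^2) + (4*(Δ φ)*c*(Real.sin φ)*b) + (1*(Real.sin φ)^2*a^2) + (4*(Real.sin φ)^2*b^2) + (-1*a^2) + (-1*b^2)) * hd2
    rw [hQ]
    exact Real.sqrt_sq (by positivity)
  -- the key pointwise identity
  have key : ∀ φ ∈ Set.uIcc (0:ℝ) (π / 2),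
      gd φ • F (g φ)
        = -(a * b * c / 2 * (1 / Δ φ) - a * b * c * Δ φ + a * b ^ 2 * Real.sin φ + Wd φ) := by
    intro φ hφ
    have hP := hPpos φ hφ
    have hΔp := hΔpos φ
    have hsq := hsqrtQ φ hφ
    have hd2 : c ^ 2 * Δ φ ^ 2 = c ^ 2 - a ^ 2 * Real.sin φ ^ 2 := by
      rw [hΔsq φ]; field_simp
    have hsc : Real.sin φ ^ 2 + Real.cos φ ^ 2 = 1 := Real.sin_sq_add_cos_sq φ
    have hPne : c * Δ φ + b * Real.sin φ ≠ 0 := by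
      have h := hPpos φ hφ; simp only [hPdef] at h; exact h.ne'
    rw [smul_eq_mul, hFdef]
    simp only
    rw [hsq]
    simp only [hgddef, hWddef, hPddef, hgdef, hPdef]
    field_simp
    linear_combination ((-2*(Δ φ)^5*c^3*b) + (-4*(Δ φ)^4*c^2*(Real.sin φ)*b^2) + (2*(Δ φ)^3*(Real.cos φ)^2*c^3*b) + (2*(Δ φ)^3*(Real.cos φ)^2*c*a^2*b) + (2*(Δ φ)^3*(Real.cos φ)^2*c*b^3) + (-2*(Δ φ)^3*c^3*(Real.sin φ)^2*b) + (1*(Δ φ)^3*c^3*b) + (2*(Δ φ)^3*c*(Real.sin φ)^2*b^3) + (-2*(Δ φ)^3*c*a^2*b) + (-2*(Δ φ)^3*c*b^3) + (2*(Δ φ)^2*(Real.cos φ)^2*c^2*(Real.sin φ)*b^2) + (-1*(Δ φ)^2*(Real.cos φ)^2*(Real.sin φ)*a^4) + (1*(Δ φ)^2*(Real.cos φ)^2*(Real.sin φ)*b^4) + (-4*(Δ φ)^2*c^2*(Real.sin φ)^3*b^2) + (3*(Δ φ)^2*c^2*(Real.sin φ)*b^2) + (-1*(Δ φ)^2*(Real.sin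 φ)^3*a^4) + (-4*(Δ φ)^2*(Real.sin φ)^3*a^2*b^2) + (1*(Δ φ)^2*(Real.sin φ)^3*b^4) + (1*(Δ φ)^2*(Real.sin φ)*a^4) + (-1*(Δ φ)^2*(Real.sin φ)*b^4) + (2*(Δ φ)*(Real.cos φ)^2*c*(Real.sin φ)^2*a^2*b) + (-2*(Δ φ)*c*(Real.sin φ)^4*b^3) + (-2*(Δ φ)*c*(Real.sin φ)^2*a^2*b) + (-1*(Δ φ)*c*(Real.sin φ)^2*b^3) + (1*(Δ φ)*c*a^2*b) + (1*(Δ φ)*c*b^3) + (2*(Real.cos φ)^2*(Real.sin φ)^3*a^2*b^2) + (1*(Real.sin φ)^3*a^4) + (-1*(Real.sin φ)*a^4) + (-1*(Real.sin φ)*a^2*b^2)) * hc2 + ((2*(Δ φ)^3*c*a^4*b) + (4*(Δ φ)^3*c*a^2*b^3) + (2*(Δ φ)^3*c*b^5) + (-1*(Δ φ)^2*(Real.sin φ)*a^6) + (-1*(Δ φ)^2*(Real.sin φ)*a^4*b^2) + (1*(Δ φ)^2*(Real.sin φ)*a^2*b^4) + (1*(Δ φ)^2*(Real.sin φ)*b^6)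 + (-1*(Δ φ)*(Real.cos φ)^2*c*a^4*b) + (-2*(Δ φ)*(Real.cos φ)^2*c*a^2*b^3) + (-1*(Δ φ)*(Real.cos φ)^2*c*b^5) + (2*(Δ φ)*c*(Real.sin φ)^2*a^4*b) + (2*(Δ φ)*c*(Real.sin φ)^2*a^2*b^3) + (-1*(Δ φ)*c*a^4*b) + (-2*(Δ φ)*c*a^2*b^3) + (-1*(Δ φ)*c*b^5) + (1*(Real.cos φ)^2*(Real.sin φ)*a^6) + (2*(Real.cos φ)^2*(Real.sin φ)*a^4*b^2) + (1*(Real.cos φ)^2*(Real.sin φ)*a^2*b^4) + (-1*(Real.sin φ)^3*a^6) + (1*(Real.sin φ)^3*a^2*b^4) + (1*(Real.sin φ)*a^6) + (2*(Real.sin φ)*a^4*b^2) + (1*(Real.sin φ)*a^2*b^4)) * hsc + ((-2*(Δ φ)^3*c*a^2*b) + (-2*(Δ φ)^3*c*b^3) + (-4*(Δ φ)^2*(Real.sin φ)*a^2*b^2) + (-4*(Δ φ)^2*(Real.sin φ)*b^4) + (-2*(Δ φ)*c*(Real.sin φ)^2*a^2*b) + (-4*(Δ φ)*c*(Real.sin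 φ)^2*b^3) + (1*(Δ φ)*c*a^2*b) + (1*(Δ φ)*c*b^3) + (1*(Real.sin φ)^3*a^4) + (-1*(Real.sin φ)^3*b^4) + (-1*(Real.sin φ)*a^4) + (-1*(Real.sin φ)*a^2*b^2)) * hd2
  -- substitution
  have hsub : (∫ φ in (0:ℝ)..(π / 2), gd φ • (F ∘ g) φ) = ∫ x in (g 0)..(g (π / 2)), F x :=
    intervalIntegral.integral_comp_smul_deriv hgderiv hgdcont hFcont
  rw [hg0, hgh] at hsub
  have hflip : (∫ x in (a * b / c)..(0:ℝ), F x) = -∫ x in (0:ℝ)..(a * b / c), F x :=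
    intervalIntegral.integral_symm _ _
  -- rewrite the substituted integral via the key identity
  have hcong : (∫ φ in (0:ℝ)..(π / 2), gd φ • (F ∘ g) φ)
      = ∫ φ in (0:ℝ)..(π / 2),
          -(a * b * c / 2 * (1 / Δ φ) - a * b * c * Δ φ + a * b ^ 2 * Real.sin φ + Wd φ) := by
    apply intervalIntegral.integral_congr
    intro φ hφ
    exact key φ hφ
  -- integrability facts
  have hint1 : IntervalIntegrable (fun φ => a * b * c / 2 * (1 / Δ φ)) MeasureTheory.volume 0 (π/2) := by
    apply Continuous.intervalIntegrable
    apply continuous_const.mul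
    exact continuous_const.div hΔcont hΔne
  have hint2 : IntervalIntegrable (fun φ => a * b * c * Δ φ) MeasureTheory.volume 0 (π/2) :=
    (continuous_const.mul hΔcont).intervalIntegrable _ _
  have hint3 : IntervalIntegrable (fun φ => a * b ^ 2 * Real.sin φ) MeasureTheory.volume 0 (π/2) :=
    (continuous_const.mul Real.continuous_sin).intervalIntegrable _ _
  have hintW : IntervalIntegrable Wd MeasureTheory.volume 0 (π/2) :=
    hWdcont.intervalIntegrable
  -- value of ∫ Wd
  have hWint : (∫ φ in (0:ℝ)..(π / 2), Wd φ) = 0 := by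
    rw [intervalIntegral.integral_eq_sub_of_hasDerivAt hWderiv hintW, hWh, hW0, sub_zero]
  -- value of ∫ sin
  have hsinint : (∫ φ in (0:ℝ)..(π / 2), Real.sin φ) = 1 := by
    rw [integral_sin]; simp
  -- elliptic integral identifications
  have hKint : (∫ φ in (0:ℝ)..(π / 2), 1 / Δ φ) = ellipticK (a / c) := rfl
  have hEint : (∫ φ in (0:ℝ)..(π / 2), Δ φ) = ellipticE (a / c) := rfl
  -- put everything together
  have h2 : (∫ x in (0:ℝ)..(a * b / c), F x)
      = ∫ φ in (0:ℝ)..(π / 2),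
          (a * b * c / 2 * (1 / Δ φ) - a * b * c * Δ φ + a * b ^ 2 * Real.sin φ + Wd φ) := by
    have h1 := hcong.symm.trans hsub
    rw [hflip, intervalIntegral.integral_neg] at h1
    have := neg_injective h1
    exact this.symm
  have hsplit : (∫ φ in (0:ℝ)..(π / 2),
        (a * b * c / 2 * (1 / Δ φ) - a * b * c * Δ φ + a * b ^ 2 * Real.sin φ + Wd φ))
      = a * b * c / 2 * ellipticK (a / c) - a * b * c * ellipticE (a / c) + a * b ^ 2 := by
    rw [intervalIntegral.integral_add ((hint1.sub hint2).add hint3) hintW,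
        intervalIntegral.integral_add (hint1.sub hint2) hint3,
        intervalIntegral.integral_sub hint1 hint2, hWint,
        intervalIntegral.integral_const_mul, intervalIntegral.integral_const_mul,
        intervalIntegral.integral_const_mul, hKint, hEint, hsinint]
    ring
  rw [h2, hsplit]
  field_simp
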